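/- Let (X, τ₁, τ₂) be a bitopological space with τ₁ ⊆ τ₂. If (X, τ₁, τ₂) is 1-submaximal (every subset is locally closed with respect to τ₁), then every set A that is (i,j)-nowhere dense for some i ≠ j, or τᵢ-nowhere dense for some i, satisfies A = cl₁(A) = cl₂(A) and A is discrete in both topologies. In particular X is nodec in both topologies and (i,j)-nodec for both orderings. -/

import Mathlib

section Helpers
variable {X : Type*}

lemma my_subset_closure (t : TopologicalSpace X) (s : Set X) :
    s ⊆ @closure X t s := subset_closure

lemma my_interior_mono (t : TopologicalSpace X) {s u : Set X} (h : s ⊆ u) :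
    @interior X t s ⊆ @interior X t u := interior_mono h

lemma my_closure_min (t : TopologicalSpace X) {s u : Set X} (h : s ⊆ u)
    (hc : @IsClosed X t u) : @closure X t s ⊆ u := closure_minimal h hc

lemma my_dense_compl (t : TopologicalSpace X) {s : Set X}
    (h : @interior X t s = ∅) : @Dense X t sᶜ :=
  interior_eq_empty_iff_dense_compl.mp h

lemma my_interior_subset (t : TopologicalSpace X) (s : Set X) :
    @interior X t s ⊆ s := interior_subset

lemma my_interior_maximal (t : TopologicalSpace X) {s u : Set X} (h : u ⊆ s)
    (ho : @IsOpen X t u) : u ⊆ @interior X t s := interior_maximal h ho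

lemma my_isClosed (t : TopologicalSpace X) {s : Set X} (h : @IsOpen X t sᶜ) :
    @IsClosed X t s := ⟨h⟩

lemma my_closure_eq (t : TopologicalSpace X) {s : Set X}
    (h : @IsClosed X t s) : @closure X t s = s := h.closure_eq

-- interior is antitone in the topology
lemma interior_topo_mono (t t' : TopologicalSpace X) (h : t' ≤ t)
    (s : Set X) : @interior X t s ⊆ @interior X t' s := by
  have h1 : @IsOpen X t' (@interior X t s) := (@isOpen_interior X t s).mono h
  have h2 : @interior X t s ⊆ s := my_interior_subset t s
  exact my_interior_maximal t' h2 h1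

-- In a submaximal space, every dense set is open.
lemma dense_isOpen_of_sub (t : TopologicalSpace X)
    (hsub : ∀ A : Set X, ∃ U F : Set X, @IsOpen X t U ∧ @IsClosed X t F ∧ A = U ∩ F)
    {D : Set X} (hD : @Dense X t D) : @IsOpen X t D := by
  obtain ⟨U, F, hU, hF, hDUF⟩ := hsub D
  have hDF : D ⊆ F := hDUF ▸ Set.inter_subset_right
  have : F = Set.univ := Set.eq_univ_of_univ_subset <| by
    calc Set.univ = @closure X t D := (hD.closure_eq).symm
    _ ⊆ F := my_closure_min t hDF hF
  rw [hDUF, this, Set.inter_univ]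
  exact hU

-- Nowhere dense sets in a submaximal space are closed and discrete.
lemma nwd_closed_discrete (t : TopologicalSpace X)
    (hsub : ∀ A : Set X, ∃ U F : Set X, @IsOpen X t U ∧ @IsClosed X t F ∧ A = U ∩ F)
    (A : Set X) (h : @interior X t (@closure X t A) = ∅) :
    @IsClosed X t A ∧ ∀ x ∈ A, ∃ U : Set X, @IsOpen X t U ∧ U ∩ A = {x} := by
  have hintA : @interior X t A = ∅ :=
    Set.subset_eq_empty (h ▸ my_interior_mono t (my_subset_closure t A)) rfl
  have hAcdense : @Dense X t Aᶜ := my_dense_compl t hintA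
  have hAclosed : @IsClosed X t A := ⟨dense_isOpen_of_sub t hsub hAcdense⟩
  refine ⟨hAclosed, fun x hx => ⟨Aᶜ ∪ {x}, ?_, ?_⟩⟩
  · exact dense_isOpen_of_sub t hsub (hAcdense.mono Set.subset_union_left)
  · ext y
    simp only [Set.mem_inter_iff, Set.mem_union, Set.mem_compl_iff, Set.mem_singleton_iff]
    constructor
    · rintro ⟨h | h, hy⟩
      · exact absurd hy h
      · exact h
    · rintro rfl
      exact ⟨Or.inr rfl, hx⟩

end Helpers

theorem stmt10 {X : Type*} (t1 t2 : TopologicalSpace X)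
    (hle : ∀ U : Set X, @IsOpen X t1 U → @IsOpen X t2 U)
    (hsub : ∀ A : Set X, ∃ U F : Set X, @IsOpen X t1 U ∧ @IsClosed X t1 F ∧ A = U ∩ F)
    (A : Set X)
    (hA : @interior X t1 (@closure X t2 A) = ∅ ∨ @interior X t2 (@closure X t1 A) = ∅ ∨
          @interior X t1 (@closure X t1 A) = ∅ ∨ @interior X t2 (@closure X t2 A) = ∅) :
    A = @closure X t1 A ∧ A = @closure X t2 A ∧
      (∀ x ∈ A, ∃ U : Set X, @IsOpen X t1 U ∧ U ∩ A = {x}) ∧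
      (∀ x ∈ A, ∃ U : Set X, @IsOpen X t2 U ∧ U ∩ A = {x}) := by
  have hle' : t2 ≤ t1 := fun U hU => hle U hU
  have hcl21 : @closure X t2 A ⊆ @closure X t1 A := @closure.mono X t2 t1 A hle'
  -- reduce all cases to int₁(cl₁ A) = ∅
  have key : @interior X t1 (@closure X t2 A) = ∅ →
      @interior X t1 (@closure X t1 A) = ∅ := by
    intro h
    have hop : @IsOpen X t1 (@closure X t2 A)ᶜ :=
      dense_isOpen_of_sub t1 hsub (my_dense_compl t1 h)
    have hcl : @IsClosed X t1 (@closure X t2 A) := my_isClosed t1 hop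
    have hsub1 : @closure X t1 A ⊆ @closure X t2 A :=
      my_closure_min t1 (my_subset_closure t2 A) hcl
    exact Set.subset_eq_empty (h ▸ my_interior_mono t1 hsub1) rfl
  have h1 : @interior X t1 (@closure X t1 A) = ∅ := by
    rcases hA with h | h | h | h
    · exact key h
    · exact Set.subset_eq_empty (h ▸ interior_topo_mono t1 t2 hle' _) rfl
    · exact h
    · exact key (Set.subset_eq_empty (h ▸ interior_topo_mono t1 t2 hle' _) rfl)
  obtain ⟨hAclosed1, hdisc1⟩ := nwd_closed_discrete t1 hsub A h1
  have hc1 : A = @closure X t1 A := (my_closure_eq t1 hAclosed1).symm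
  have hc2 : A = @closure X t2 A :=
    Set.Subset.antisymm (my_subset_closure t2 A)
      (le_trans hcl21 (my_closure_eq t1 hAclosed1).le)
  refine ⟨hc1, hc2, hdisc1, fun x hx => ?_⟩
  obtain ⟨U, hU, hUA⟩ := hdisc1 x hx
  exact ⟨U, hle U hU, hUA⟩
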